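/- Every word w of length 3k over a k-letter alphabet contains twins of length at least (k/3)^{1/3}, assuming that among any three s⃗-multipermutations of total length n, some pair has LCS at least n^{1/3}. -/

import Mathlib

/-- Twins of length `m` in a word `w`: two disjoint strictly increasing index
sequences whose induced subsequences are equal as words. -/
def HasTwins (w : List ℕ) (m : ℕ) : Prop :=
  ∃ p q : List ℕ,
    p.Chain' (· < ·) ∧ q.Chain' (· < ·) ∧
    (∀ i ∈ p, i < w.length) ∧ (∀ i ∈ q, i < w.length) ∧
    p.Disjoint q ∧ p.length = m ∧ q.length = m ∧
    p.map (fun i => w.getD i 0) = q.map (fun i => w.getD i 0)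

/-- An `s`-multipermutation over the alphabet `{0, …, k-1}`. -/
def IsMultiperm (k : ℕ) (s : ℕ → ℕ) (w : List ℕ) : Prop :=
  (∀ a ∈ w, a < k) ∧ ∀ l < k, w.count l = s l


theorem countF (w : List ℕ) (l a b : ℕ) :
    (((List.range w.length).filter (fun i =>
      w.getD i 0 = l ∧ a ≤ (w.take i).count l ∧ (w.take i).count l < b)).length : ℕ)
    = min b (w.count l) - min a (w.count l) := by
  induction w using List.reverseRecOn with
  | nil => simp
  | append_singleton u x ih =>
    rw [List.length_append, List.length_singleton, List.range_succ, List.filter_append,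
      List.length_append]
    have h1 : (List.filter (fun i =>
        decide ((u ++ [x]).getD i 0 = l ∧ a ≤ ((u ++ [x]).take i).count l ∧ ((u ++ [x]).take i).count l < b)) (List.range u.length))
        = (List.filter (fun i => decide (u.getD i 0 = l ∧ a ≤ (u.take i).count l ∧ (u.take i).count l < b)) (List.range u.length)) := by
      apply List.filter_congr
      intro i hi
      rw [List.mem_range] at hi
      rw [List.getD_append _ _ _ _ hi, List.take_append_of_le_length hi.le]
    have h2 : (u ++ [x]).getD u.length 0 = x := by
      rw [List.getD_append_right _ _ _ _ le_rfl, Nat.sub_self]; rfl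
    have h3 : (u ++ [x]).take u.length = u := List.take_left
    rw [h1, ih, List.filter_singleton, h2, h3, List.count_append, List.count_singleton]
    by_cases hc : x = l ∧ a ≤ u.count l ∧ u.count l < b
    · obtain ⟨hx, hab⟩ := hc
      subst hx
      simp only [hab.1, hab.2, and_true, true_and, decide_true, cond_true,
        List.length_singleton, if_pos rfl, beq_self_eq_true, if_true]
      omega
    · have hd : decide (x = l ∧ a ≤ u.count l ∧ u.count l < b) = false := by
        simpa using hc
      rw [hd]
      simp only [cond_false, List.length_nil]
      by_cases hx : x = l
      · have := fun h1 h2 => hc ⟨hx, h1, h2⟩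
        simp only [hx, beq_self_eq_true, if_true]
        omega
      · have hlx : ¬ (x == l) = true := by simpa using hx
        rw [if_neg hlx]
        omega


theorem sumCount (k : ℕ) (w : List ℕ) (h : ∀ a ∈ w, a < k) :
    ∑ l ∈ Finset.range k, w.count l = w.length := by
  induction w with
  | nil => simp
  | cons a t ih =>
    have ha : a < k := h a (List.mem_cons_self)
    have ht : ∀ b ∈ t, b < k := fun b hb => h b (List.mem_cons_of_mem a hb)
    simp only [List.count_cons, List.length_cons, Finset.sum_add_distrib, ih ht]
    congr 1
    simp only [beq_iff_eq]
    rw [Finset.sum_ite_eq (Finset.range k) a (fun _ => 1)]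
    simp [Finset.mem_range.mpr ha]

theorem stmt6
    (H : ∀ (k n : ℕ) (s : ℕ → ℕ), n = ∑ l ∈ Finset.range k, s l →
      ∀ π : Fin 3 → List ℕ, (∀ i, IsMultiperm k s (π i)) →
        ∃ i j : Fin 3, i < j ∧ ∃ w : List ℕ, w.Sublist (π i) ∧ w.Sublist (π j) ∧
          (w.length : ℝ) ≥ (n : ℝ) ^ ((1 : ℝ)/3))
    (k : ℕ) (w : List ℕ) (hlen : w.length = 3 * k) (halph : ∀ a ∈ w, a < k) :
    ∃ m : ℕ, HasTwins w m ∧ (m : ℝ) ≥ ((k : ℝ)/3) ^ ((1 : ℝ)/3) := by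
  classical
  set s : ℕ → ℕ := fun l => w.count l / 3 with hs
  set P : Fin 3 → List ℕ := fun g => (List.range w.length).filter (fun i =>
      (g : ℕ) * s (w.getD i 0) ≤ (w.take i).count (w.getD i 0) ∧
      (w.take i).count (w.getD i 0) < ((g : ℕ) + 1) * s (w.getD i 0)) with hP
  set f : ℕ → ℕ := fun i => w.getD i 0 with hf
  set π : Fin 3 → List ℕ := fun g => (P g).map f with hπ
  set n : ℕ := ∑ l ∈ Finset.range k, s l with hn
  -- basic facts about P
  have hPsub : ∀ g, (P g).Sublist (List.range w.length) := fun g => List.filter_sublist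
  have hPmem : ∀ g, ∀ i ∈ P g, i < w.length := by
    intro g i hi
    have := (hPsub g).subset hi
    exact List.mem_range.mp this
  have hPpair : ∀ g, (P g).Pairwise (· < ·) := fun g =>
    List.pairwise_lt_range.sublist (hPsub g)
  have hPcond : ∀ g : Fin 3, ∀ i ∈ P g,
      (g : ℕ) * s (w.getD i 0) ≤ (w.take i).count (w.getD i 0) ∧
      (w.take i).count (w.getD i 0) < ((g : ℕ) + 1) * s (w.getD i 0) := by
    intro g i hi
    rw [hP, List.mem_filter] at hi
    exact of_decide_eq_true hi.2
  have hPdisj : ∀ g g' : Fin 3, g ≠ g' → (P g).Disjoint (P g') := by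
    intro g g' hgg' i hi hi'
    obtain ⟨h1, h2⟩ := hPcond g i hi
    obtain ⟨h3, h4⟩ := hPcond g' i hi'
    set S := s (w.getD i 0)
    have hne : (g : ℕ) ≠ (g' : ℕ) := fun h => hgg' (Fin.ext h)
    rcases Nat.lt_or_ge (g : ℕ) (g' : ℕ) with hlt | hge
    · have : ((g : ℕ) + 1) * S ≤ (g' : ℕ) * S := Nat.mul_le_mul_right S hlt
      omega
    · have hlt' : (g' : ℕ) < (g : ℕ) := lt_of_le_of_ne hge (Ne.symm hne)
      have : ((g' : ℕ) + 1) * S ≤ (g : ℕ) * S := Nat.mul_le_mul_right S hlt'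
      omega
  -- counts
  have hcount : ∀ g : Fin 3, ∀ l, l < k → (π g).count l = s l := by
    intro g l hl
    rw [hπ]
    simp only
    rw [List.count_eq_countP, List.countP_map, List.countP_eq_length_filter, hP]
    simp only
    rw [List.filter_filter]
    have heq : ∀ i ∈ List.range w.length,
        (((fun x => x == l) ∘ f) i && decide ((g : ℕ) * s (w.getD i 0) ≤ (w.take i).count (w.getD i 0) ∧
          (w.take i).count (w.getD i 0) < ((g : ℕ) + 1) * s (w.getD i 0)))
        = decide (w.getD i 0 = l ∧ (g : ℕ) * s l ≤ (w.take i).count l ∧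
            (w.take i).count l < ((g : ℕ) + 1) * s l) := by
      intro i _
      simp only [Function.comp_apply]
      by_cases h : w.getD i 0 = l
      · have hb : (f i == l) = true := by
          rw [hf]; simpa using h
        rw [hb, Bool.true_and]
        have hd : decide (w.getD i 0 = l ∧ (g : ℕ) * s l ≤ (w.take i).count l ∧
            (w.take i).count l < ((g : ℕ) + 1) * s l)
            = decide ((g : ℕ) * s l ≤ (w.take i).count l ∧
            (w.take i).count l < ((g : ℕ) + 1) * s l) := by
          apply decide_eq_decide.mpr
          exact ⟨fun hx => hx.2, fun hx => ⟨h, hx⟩⟩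
        rw [hd, h]
      · have hb : (f i == l) = false := by
          rw [hf]; simpa using h
        rw [hb, Bool.false_and]
        symm
        apply decide_eq_false
        exact fun hc => h hc.1
    rw [List.filter_congr heq, countF w l ((g : ℕ) * s l) (((g : ℕ) + 1) * s l)]
    have h3s : 3 * s l ≤ w.count l := by
      have : s l = w.count l / 3 := rfl
      omega
    have hg2 : (g : ℕ) ≤ 2 := Nat.lt_succ_iff.mp g.isLt
    have hb : ((g : ℕ) + 1) * s l ≤ w.count l :=
      le_trans (Nat.mul_le_mul_right _ (by omega)) h3s
    have ha : (g : ℕ) * s l ≤ w.count l :=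
      le_trans (Nat.mul_le_mul_right _ (Nat.le_succ _)) hb
    rw [min_eq_left hb, min_eq_left ha, add_one_mul, Nat.add_sub_cancel_left]
  have hmulti : ∀ g, IsMultiperm k s (π g) := by
    intro g
    constructor
    · intro a ha
      rw [hπ] at ha
      simp only [List.mem_map] at ha
      obtain ⟨i, hi, rfl⟩ := ha
      have hilt := hPmem g i hi
      rw [hf]
      simp only
      rw [List.getD_eq_getElem w 0 hilt]
      exact halph _ (List.getElem_mem hilt)
    · exact fun l hl => hcount g l hl
  obtain ⟨i, j, hij, u, hui, huj, hulen⟩ := H k n s hn π hmulti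
  obtain ⟨p, hp, rfl⟩ := List.sublist_map_iff.mp hui
  obtain ⟨q, hq, hpq⟩ := List.sublist_map_iff.mp huj
  refine ⟨p.length, ⟨p, q, ?_, ?_, ?_, ?_, ?_, rfl, ?_, hpq⟩, ?_⟩
  · exact List.isChain_iff_pairwise.mpr ((hPpair i).sublist hp)
  · exact List.isChain_iff_pairwise.mpr ((hPpair j).sublist hq)
  · exact fun x hx => hPmem i x (hp.subset hx)
  · exact fun x hx => hPmem j x (hq.subset hx)
  · exact fun x hx hx' => hPdisj i j (ne_of_lt hij) (hp.subset hx) (hq.subset hx')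
  · have := congrArg List.length hpq
    simpa using this.symm
  · -- numeric bound
    have hsum : ∑ l ∈ Finset.range k, w.count l = 3 * k := by
      rw [sumCount k w halph, hlen]
    have hk3n : k ≤ 3 * n := by
      have hle : ∑ l ∈ Finset.range k, w.count l ≤ ∑ l ∈ Finset.range k, (3 * s l + 2) := by
        apply Finset.sum_le_sum
        intro l _
        have : s l = w.count l / 3 := rfl
        omega
      rw [hsum] at hle
      rw [Finset.sum_add_distrib, ← Finset.mul_sum, Finset.sum_const, Finset.card_range,
        smul_eq_mul] at hle
      rw [hn]
      omega
    have hkn : ((k : ℝ) / 3) ≤ (n : ℝ) := by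
      rw [div_le_iff₀ (by norm_num : (0:ℝ) < 3)]
      have : (k : ℝ) ≤ ((3 * n : ℕ) : ℝ) := Nat.cast_le.mpr hk3n
      push_cast at this ⊢
      linarith
    have hrpow : ((k : ℝ) / 3) ^ ((1:ℝ)/3) ≤ (n : ℝ) ^ ((1:ℝ)/3) :=
      Real.rpow_le_rpow (by positivity) hkn (by norm_num)
    have hplen : (p.map f).length = p.length := List.length_map _
    rw [hplen] at hulen
    exact le_trans hrpow hulen
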